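/- For all integers p ≥ 2 and 1 ≤ K ≤ p/2, the number of functions φ : {1,…,p} → {1,…,p} such that (i) φ(i) ≠ i for all i, (ii) every φ-periodic point i (i.e., φ^m(i) = i for some m ≥ 1) satisfies φ(φ(i)) = i, and (iii) the partition of {1,…,p} into classes of the equivalence relation generated by i ∼ φ(i) has exactly K classes, equals 2 (p−1)! p^{p−2K} / ( 2^K (K−1)! (p−2K)! ). -/

import Mathlib

open Relation

section Pieces
open Finset
variable {α : Type*} [Fintype α] [DecidableEq α]

lemma iter_agree {f g : α → α} {P : α → Prop} (h : ∀ y, P y → f y = g y)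
    {x : α} {n : ℕ} (hx : ∀ k < n, P (f^[k] x)) : f^[n] x = g^[n] x := by
  induction n with
  | zero => rfl
  | succ n ih =>
    have h1 : f^[n] x = g^[n] x := ih (fun k hk => hx k (Nat.lt_succ_of_lt hk))
    rw [Function.iterate_succ_apply', Function.iterate_succ_apply',
      h (f^[n] x) (hx n (Nat.lt_succ_self n)), h1]

noncomputable def Esc (T V : Finset α) : Finset (α → α) :=
  @Finset.filter _
    (fun f => (∀ x, x ∉ T → f x = x) ∧ (∀ x ∈ T, f x ∈ V) ∧ ∀ x, ∃ n, f^[n] x ∉ T)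
    (Classical.decPred _) Finset.univ

lemma mem_Esc {T V : Finset α} {f : α → α} :
    f ∈ Esc T V ↔
      (∀ x, x ∉ T → f x = x) ∧ (∀ x ∈ T, f x ∈ V) ∧ ∀ x, ∃ n, f^[n] x ∉ T := by
  simp [Esc, Finset.mem_filter]

/-- For a function with eventual escape from a set, there is a minimal escape time. -/
lemma first_exit {f : α → α} {x : α} (P : α → Prop) (h : ∃ n, ¬ P (f^[n] x)) :
    ∃ n, ¬ P (f^[n] x) ∧ ∀ k < n, P (f^[k] x) := by
  classical
  refine ⟨Nat.find h, Nat.find_spec h, fun k hk => ?_⟩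
  by_contra hc
  exact absurd hk (not_lt.mpr (Nat.find_le hc))


lemma card_prescribed (L S : Finset α) :
    ((Finset.univ : Finset (α → α)).filter
      (fun g => (∀ x, x ∉ L → g x = x) ∧ ∀ x ∈ L, g x ∈ S)).card = S.card ^ L.card := by
  have h1 : ((Finset.univ : Finset (α → α)).filter
      (fun g => (∀ x, x ∉ L → g x = x) ∧ ∀ x ∈ L, g x ∈ S)) =
      Fintype.piFinset (fun x => if x ∈ L then S else {x}) := by
    ext g
    simp only [mem_filter, mem_univ, true_and, Fintype.mem_piFinset]
    constructor
    · rintro ⟨h1, h2⟩ a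
      by_cases ha : a ∈ L
      · simp [ha, h2 a ha]
      · simp [ha, h1 a ha]
    · intro h
      constructor
      · intro a ha
        have := h a
        simpa [ha] using this
      · intro a ha
        have := h a
        simpa [ha] using this
  rw [h1, Fintype.card_piFinset]
  have h2 : ∀ x : α, (if x ∈ L then S else {x}).card = if x ∈ L then S.card else 1 := by
    intro x; split <;> simp
  simp_rw [h2]
  rw [Finset.prod_ite_mem, univ_inter, Finset.prod_const]

lemma esc_fiber_card (T V L : Finset α) (hTV : T ⊆ V) (hL : L ⊆ T) :
    ((Esc T V).filter (fun f => T.filter (fun x => f x ∉ T) = L)).card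
      = (V \ T).card ^ L.card * (Esc (T \ L) T).card := by
  have key : ((Esc T V).filter (fun f => T.filter (fun x => f x ∉ T) = L)).card
      = (((Finset.univ : Finset (α → α)).filter
          (fun g => (∀ x, x ∉ L → g x = x) ∧ ∀ x ∈ L, g x ∈ V \ T)) ×ˢ Esc (T \ L) T).card := by
    apply Finset.card_nbij'
      (i := fun f => (fun x => if x ∈ L then f x else x, fun x => if x ∈ T \ L then f x else x))
      (j := fun g => fun x => if x ∈ L then g.1 x else g.2 x)
    · -- forward membership
      intro f hf
      rw [Finset.mem_coe, Finset.mem_filter] at hf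
      obtain ⟨hf, hfib⟩ := hf
      rw [mem_Esc] at hf
      obtain ⟨hsupp, hmap, hesc⟩ := hf
      have hLmem : ∀ x, x ∈ L ↔ x ∈ T ∧ f x ∉ T := by
        intro x; rw [← hfib, Finset.mem_filter]
      rw [Finset.mem_coe, Finset.mem_product]
      dsimp only
      constructor
      · rw [Finset.mem_filter]
        refine ⟨Finset.mem_univ _, fun x hx => if_neg hx, fun x hx => ?_⟩
        simp only [if_pos hx]
        have := (hLmem x).mp hx
        exact Finset.mem_sdiff.mpr ⟨hmap x this.1, this.2⟩
      · rw [mem_Esc]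
        refine ⟨fun x hx => if_neg hx, fun x hx => ?_, fun x => ?_⟩
        · simp only [if_pos hx]
          rw [Finset.mem_sdiff] at hx
          by_contra hc
          exact hx.2 ((hLmem x).mpr ⟨hx.1, hc⟩)
        · obtain ⟨n, hn⟩ := hesc x
          have h' : ∃ m, ¬ (f^[m] x ∈ T \ L) := ⟨n, fun h => hn (Finset.mem_sdiff.mp h).1⟩
          obtain ⟨n₀, hn₀, hmin⟩ := first_exit (fun y => y ∈ T \ L) h'
          refine ⟨n₀, ?_⟩
          have hag : f^[n₀] x = (fun x => if x ∈ T \ L then f x else x)^[n₀] x :=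
            iter_agree (fun y hy => (if_pos hy).symm) hmin
          rw [← hag]; exact hn₀
    · -- backward membership
      intro g hg
      rw [Finset.mem_coe, Finset.mem_product] at hg
      obtain ⟨hg1, hg2⟩ := hg
      rw [Finset.mem_filter] at hg1
      obtain ⟨-, hg1supp, hg1map⟩ := hg1
      rw [mem_Esc] at hg2
      obtain ⟨hg2supp, hg2map, hg2esc⟩ := hg2
      set f : α → α := fun x => if x ∈ L then g.1 x else g.2 x with hfdef
      have hfag : ∀ y, y ∈ T \ L → f y = g.2 y := by
        intro y hy
        simp only [hfdef, if_neg (Finset.mem_sdiff.mp hy).2]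
      have hesc : ∀ x, ∃ n, f^[n] x ∉ T := by
        intro x
        obtain ⟨n₀, hn₀, hmin⟩ := first_exit (fun y => y ∈ T \ L) (hg2esc x)
        have hag : g.2^[n₀] x = f^[n₀] x :=
          iter_agree (fun y hy => (hfag y hy).symm) hmin
        by_cases hy : g.2^[n₀] x ∈ T
        · have hyL : g.2^[n₀] x ∈ L := by
            by_contra hc
            exact hn₀ (Finset.mem_sdiff.mpr ⟨hy, hc⟩)
          refine ⟨n₀ + 1, ?_⟩
          rw [Function.iterate_succ_apply', ← hag]
          have : f (g.2^[n₀] x) = g.1 (g.2^[n₀] x) := if_pos hyL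
          rw [this]
          have := hg1map _ hyL
          exact (Finset.mem_sdiff.mp this).2
        · exact ⟨n₀, by rw [← hag]; exact hy⟩
      rw [Finset.mem_coe, Finset.mem_filter, mem_Esc]
      refine ⟨⟨fun x hx => ?_, fun x hx => ?_, hesc⟩, ?_⟩
      · -- support
        have hxL : x ∉ L := fun h => hx (hL h)
        have hxTL : x ∉ T \ L := fun h => hx (Finset.mem_sdiff.mp h).1
        simp only [hfdef, if_neg hxL, hg2supp x hxTL]
      · -- maps into V
        by_cases hxL : x ∈ L
        · simp only [hfdef, if_pos hxL]
          exact (Finset.mem_sdiff.mp (hg1map x hxL)).1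
        · simp only [hfdef, if_neg hxL]
          exact hTV (hg2map x (Finset.mem_sdiff.mpr ⟨hx, hxL⟩))
      · -- fiber condition
        ext x
        rw [Finset.mem_filter]
        constructor
        · rintro ⟨hxT, hfx⟩
          by_contra hxL
          have hxTL : x ∈ T \ L := Finset.mem_sdiff.mpr ⟨hxT, hxL⟩
          change f x ∉ T at hfx
          rw [hfag x hxTL] at hfx
          exact hfx (hg2map x hxTL)
        · intro hxL
          refine ⟨hL hxL, ?_⟩
          simp only [hfdef, if_pos hxL]
          exact (Finset.mem_sdiff.mp (hg1map x hxL)).2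
    · -- left inverse
      intro f hf
      rw [Finset.mem_coe, Finset.mem_filter] at hf
      obtain ⟨hf, hfib⟩ := hf
      rw [mem_Esc] at hf
      funext x
      dsimp only
      by_cases hxL : x ∈ L
      · simp only [if_pos hxL]
      · simp only [if_neg hxL]
        by_cases hxTL : x ∈ T \ L
        · simp only [if_pos hxTL]
        · simp only [if_neg hxTL]
          have hxT : x ∉ T := by
            intro hxT
            exact hxTL (Finset.mem_sdiff.mpr ⟨hxT, hxL⟩)
          exact (hf.1 x hxT).symm
    · -- right inverse
      intro g hg
      rw [Finset.mem_coe, Finset.mem_product] at hg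
      obtain ⟨hg1, hg2⟩ := hg
      rw [Finset.mem_filter] at hg1
      rw [mem_Esc] at hg2
      ext x
      · dsimp only
        by_cases hxL : x ∈ L
        · simp only [if_pos hxL]
        · simp only [if_neg hxL]
          exact (hg1.2.1 x hxL).symm
      · dsimp only
        by_cases hxTL : x ∈ T \ L
        · simp only [if_pos hxTL, if_neg (Finset.mem_sdiff.mp hxTL).2]
        · simp only [if_neg hxTL]
          exact (hg2.1 x hxTL).symm
  rw [key, Finset.card_product]
  congr 1
  exact card_prescribed L (V \ T)

lemma Esc_empty (V : Finset α) : Esc (∅ : Finset α) V = {id} := by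
  ext f
  simp only [mem_Esc, mem_singleton]
  constructor
  · rintro ⟨h1, -, -⟩
    funext x
    exact h1 x (Finset.notMem_empty x)
  · rintro rfl
    exact ⟨fun x _ => rfl, fun x hx => absurd hx (Finset.notMem_empty x),
      fun x => ⟨0, Finset.notMem_empty x⟩⟩

lemma Esc_self (T : Finset α) (hT : T.Nonempty) : Esc T T = ∅ := by
  rw [Finset.eq_empty_iff_forall_notMem]
  intro f hf
  rw [mem_Esc] at hf
  obtain ⟨x, hx⟩ := hT
  obtain ⟨n, hn⟩ := hf.2.2 x
  apply hn
  clear hn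
  induction n with
  | zero => exact hx
  | succ n ih =>
    rw [Function.iterate_succ_apply']
    exact hf.2.1 _ ih

lemma esc_card_rec (T V : Finset α) (hTV : T ⊆ V) :
    (Esc T V).card = ∑ L ∈ T.powerset, (V \ T).card ^ L.card * (Esc (T \ L) T).card := by
  rw [Finset.card_eq_sum_card_fiberwise
    (f := fun f => T.filter (fun x => f x ∉ T)) (t := T.powerset)
    (s := Esc T V) (fun f _ => Finset.mem_coe.mpr (Finset.mem_powerset.mpr (Finset.filter_subset _ _)))]
  exact Finset.sum_congr rfl fun L hL =>
    esc_fiber_card T V L hTV (Finset.mem_powerset.mp hL)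

theorem esc_card_eq (t : ℕ) : ∀ T V : Finset α, T ⊆ V → T.card = t → 1 ≤ t →
    (Esc T V).card = (V.card - t) * V.card ^ (t - 1) := by
  induction t using Nat.strong_induction_on with
  | _ t IH =>
    intro T V hTV hT ht1
    have htv : t ≤ V.card := hT ▸ Finset.card_le_card hTV
    set v := V.card with hv
    set r := v - t with hr
    rw [esc_card_rec T V hTV, Finset.sum_powerset, hT]
    have hVT : (V \ T).card = r := by rw [Finset.card_sdiff_of_subset hTV, hT]
    have hsum : ∀ j ∈ Finset.range (t + 1),
        (∑ L ∈ Finset.powersetCard j T, (V \ T).card ^ L.card * (Esc (T \ L) T).card)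
          = if j = 0 then 0 else (t - 1).choose (j - 1) * (r ^ j * t ^ (t - j)) := by
      intro j hj
      rw [Finset.mem_range] at hj
      have hterm : ∀ L ∈ Finset.powersetCard j T,
          (V \ T).card ^ L.card * (Esc (T \ L) T).card
            = if j = 0 then 0 else (r ^ j * (if j = t then 1 else j * t ^ (t - j - 1))) := by
        intro L hLm
        rw [Finset.mem_powersetCard] at hLm
        obtain ⟨hLsub, hLcard⟩ := hLm
        have hTL : (T \ L).card = t - j := by
          rw [Finset.card_sdiff_of_subset hLsub, hT, hLcard]
        rcases Nat.eq_zero_or_pos j with hj0 | hjpos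
        · subst hj0
          rw [Finset.card_eq_zero] at hLcard
          subst hLcard
          rw [Finset.sdiff_empty, Esc_self T (Finset.card_pos.mp (hT ▸ ht1)), if_pos rfl]
          simp
        · rw [if_neg (Nat.pos_iff_ne_zero.mp hjpos), hVT, hLcard]
          congr 1
          by_cases hjt : j = t
          · rw [if_pos hjt]
            have : (T \ L).card = 0 := by omega
            rw [Finset.card_eq_zero] at this
            rw [this, Esc_empty, Finset.card_singleton]
          · rw [if_neg hjt]
            have hjlt : t - j < t := by omega
            rw [IH (t - j) hjlt (T \ L) T Finset.sdiff_subset hTL (by omega), hT]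
            congr 1
            omega
      rw [Finset.sum_congr rfl hterm, Finset.sum_const, Finset.card_powersetCard, hT,
        smul_eq_mul]
      rcases Nat.eq_zero_or_pos j with hj0 | hjpos
      · subst hj0; simp
      · rw [if_neg (Nat.pos_iff_ne_zero.mp hjpos), if_neg (Nat.pos_iff_ne_zero.mp hjpos)]
        by_cases hjt : j = t
        · subst hjt
          simp [Nat.sub_self]
        · rw [if_neg hjt]
          have key : t * (t - 1).choose (j - 1) = t.choose j * j := by
            have h := Nat.add_one_mul_choose_eq (t - 1) (j - 1)
            rwa [show t - 1 + 1 = t from by omega, show j - 1 + 1 = j from by omega] at h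
          have hpow : t ^ (t - j) = t ^ (t - j - 1) * t := by
            rw [← pow_succ]
            congr 1
            omega
          calc t.choose j * (r ^ j * (j * t ^ (t - j - 1)))
              = (t.choose j * j) * (r ^ j * t ^ (t - j - 1)) := by ring
            _ = (t * (t - 1).choose (j - 1)) * (r ^ j * t ^ (t - j - 1)) := by rw [key]
            _ = (t - 1).choose (j - 1) * (r ^ j * (t ^ (t - j - 1) * t)) := by ring
            _ = (t - 1).choose (j - 1) * (r ^ j * t ^ (t - j)) := by rw [← hpow]
    rw [Finset.sum_congr rfl hsum, Finset.sum_range_succ', if_pos rfl, add_zero]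
    have hstep : ∀ i ∈ Finset.range t,
        (if i + 1 = 0 then 0 else (t - 1).choose (i + 1 - 1) * (r ^ (i + 1) * t ^ (t - (i + 1))))
          = r * (r ^ i * t ^ (t - 1 - i) * (t - 1).choose i) := by
      intro i _
      rw [if_neg i.succ_ne_zero, Nat.add_sub_cancel]
      have : t - (i + 1) = t - 1 - i := by omega
      rw [this]
      ring
    rw [Finset.sum_congr rfl hstep, ← Finset.mul_sum]
    have hvrt : v = r + t := by omega
    have hb : (r + t) ^ (t - 1) = ∑ i ∈ Finset.range t, r ^ i * t ^ (t - 1 - i) * (t - 1).choose i := by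
      rw [add_pow]
      simp only [Nat.cast_id]
      rw [show t - 1 + 1 = t from by omega]
    rw [← hb, ← hvrt]

def Jfun : ℕ → ℕ
  | 0 => 1
  | (k+1) => (2*k+1) * Jfun k

lemma Jfun_mul (k : ℕ) : Jfun k * (2 ^ k * k.factorial) = (2 * k).factorial := by
  induction k with
  | zero => simp [Jfun]
  | succ k ih =>
    have hl : Nat.factorial (2 * (k+1)) = (2*k+2) * ((2*k+1) * Nat.factorial (2*k)) := by
      rw [show 2*(k+1) = 2*k+1+1 by ring, Nat.factorial_succ, Nat.factorial_succ]
    rw [hl, ← ih, Jfun, Nat.factorial_succ, pow_succ]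
    ring

noncomputable def Invo (A : Finset α) : Finset (α → α) :=
  @Finset.filter _
    (fun f => (∀ x, x ∉ A → f x = x) ∧ ∀ x ∈ A, f x ∈ A ∧ f (f x) = x ∧ f x ≠ x)
    (Classical.decPred _) Finset.univ

lemma mem_Invo {A : Finset α} {f : α → α} :
    f ∈ Invo A ↔ (∀ x, x ∉ A → f x = x) ∧ ∀ x ∈ A, f x ∈ A ∧ f (f x) = x ∧ f x ≠ x := by
  simp [Invo, Finset.mem_filter]

lemma invo_card (m : ℕ) : ∀ A : Finset α, A.card = 2 * m → (Invo A).card = Jfun m := by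
  induction m with
  | zero =>
    intro A hA
    rw [Nat.mul_zero, Finset.card_eq_zero] at hA
    subst hA
    have : Invo (∅ : Finset α) = {id} := by
      ext f
      simp only [mem_Invo, mem_singleton]
      constructor
      · rintro ⟨h1, -⟩
        funext x
        exact h1 x (Finset.notMem_empty x)
      · rintro rfl
        exact ⟨fun x _ => rfl, fun x hx => absurd hx (Finset.notMem_empty x)⟩
    rw [this, Finset.card_singleton, Jfun]
  | succ m IH =>
    intro A hA
    have hAne : A.Nonempty := Finset.card_pos.mp (by omega)
    obtain ⟨a, ha⟩ := hAne
    have hmemfib : ∀ f ∈ Invo A, (fun f : α → α => f a) f ∈ A.erase a := by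
      intro f hf
      rw [mem_Invo] at hf
      exact Finset.mem_erase.mpr ⟨(hf.2 a ha).2.2, (hf.2 a ha).1⟩
    rw [Finset.card_eq_sum_card_fiberwise hmemfib]
    have hfibcard : ∀ b ∈ A.erase a,
        ((Invo A).filter (fun f => (fun f : α → α => f a) f = b)).card = Jfun m := by
      intro b hb
      rw [Finset.mem_erase] at hb
      obtain ⟨hba, hbA⟩ := hb
      have hA'card : ((A.erase a).erase b).card = 2 * m := by
        rw [Finset.card_erase_of_mem (Finset.mem_erase.mpr ⟨hba, hbA⟩),
          Finset.card_erase_of_mem ha, hA]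
        omega
      have hmemA' : ∀ x, x ∈ (A.erase a).erase b ↔ x ∈ A ∧ x ≠ a ∧ x ≠ b := by
        intro x
        rw [Finset.mem_erase, Finset.mem_erase]
        tauto
      have hcard : ((Invo A).filter (fun f => (fun f : α → α => f a) f = b)).card
          = (Invo ((A.erase a).erase b)).card := by
        apply Finset.card_nbij'
          (i := fun f => fun x => if x = a ∨ x = b then x else f x)
          (j := fun g => fun x => if x = a then b else if x = b then a else g x)
        · intro f hf
          rw [Finset.mem_coe, Finset.mem_filter, mem_Invo] at hf
          obtain ⟨⟨hsupp, hmap⟩, hfa⟩ := hf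
          dsimp only at hfa
          have hfb : f b = a := by rw [← hfa]; exact (hmap a ha).2.1
          rw [Finset.mem_coe, mem_Invo]
          constructor
          · intro x hx
            by_cases hab : x = a ∨ x = b
            · simp only [if_pos hab]
            · simp only [if_neg hab]
              push_neg at hab
              apply hsupp
              intro hxA
              exact hx ((hmemA' x).mpr ⟨hxA, hab.1, hab.2⟩)
          · intro x hx
            rw [hmemA' x] at hx
            obtain ⟨hxA, hxa, hxb⟩ := hx
            have h1 : ¬(x = a ∨ x = b) := by tauto
            obtain ⟨hfxA, hffx, hfxx⟩ := hmap x hxA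
            have hfxa : f x ≠ a := by
              intro h
              apply hxb
              rw [← hffx, h, hfa]
            have hfxb : f x ≠ b := by
              intro h
              apply hxa
              rw [← hffx, h, hfb]
            have h2 : ¬(f x = a ∨ f x = b) := by tauto
            simp only [if_neg h1, if_neg h2]
            exact ⟨(hmemA' (f x)).mpr ⟨hfxA, hfxa, hfxb⟩, hffx, hfxx⟩
        · intro g hg
          rw [Finset.mem_coe, mem_Invo] at hg
          obtain ⟨hsupp, hmap⟩ := hg
          rw [Finset.mem_coe, Finset.mem_filter, mem_Invo]
          refine ⟨⟨?_, ?_⟩, by simp [hba]⟩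
          · intro x hx
            have hxa : x ≠ a := fun h => hx (h ▸ ha)
            have hxb : x ≠ b := fun h => hx (h ▸ hbA)
            simp only [if_neg hxa, if_neg hxb]
            apply hsupp
            rw [hmemA']
            tauto
          · intro x hx
            by_cases hxa : x = a
            · subst hxa
              simp [hba, hbA]
            · by_cases hxb : x = b
              · subst hxb
                simp [hba, Ne.symm hba, ha, hxa]
              · have hxA' : x ∈ (A.erase a).erase b := (hmemA' x).mpr ⟨hx, hxa, hxb⟩
                obtain ⟨hgxA', hggx, hgxx⟩ := hmap x hxA'
                have hg2 := (hmemA' (g x)).mp hgxA'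
                simp only [if_neg hxa, if_neg hxb, if_neg hg2.2.1, if_neg hg2.2.2]
                exact ⟨hg2.1, hggx, hgxx⟩
        · intro f hf
          rw [Finset.mem_coe, Finset.mem_filter, mem_Invo] at hf
          obtain ⟨⟨hsupp, hmap⟩, hfa⟩ := hf
          dsimp only at hfa
          have hfb : f b = a := by rw [← hfa]; exact (hmap a ha).2.1
          funext x
          dsimp only
          by_cases hxa : x = a
          · subst hxa; simp [hfa]
          · by_cases hxb : x = b
            · subst hxb; simp [hxa, hfb]
            · simp [hxa, hxb]
        · intro g hg
          rw [Finset.mem_coe, mem_Invo] at hg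
          obtain ⟨hsupp, -⟩ := hg
          funext x
          dsimp only
          by_cases hab : x = a ∨ x = b
          · simp only [if_pos hab]
            have hx : x ∉ (A.erase a).erase b := by
              rw [hmemA']
              tauto
            exact (hsupp x hx).symm
          · push_neg at hab
            simp only [if_neg (by tauto : ¬(x = a ∨ x = b)), if_neg hab.1, if_neg hab.2]
      rw [hcard, IH _ hA'card]
    rw [Finset.sum_congr rfl hfibcard, Finset.sum_const,
      Finset.card_erase_of_mem ha, hA, smul_eq_mul, Jfun]
    have h2 : 2 * (m + 1) - 1 = 2 * m + 1 := by omega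
    rw [h2]

end Pieces

section Pieces2
open Finset
variable {β : Type*} [Fintype β] [LinearOrder β]


lemma classes_card (φ : β → β) (A : Finset β)
    (hA1 : ∀ i ∈ A, φ i ∈ A) (hA2 : ∀ i ∈ A, φ (φ i) = i) (hA3 : ∀ i ∈ A, φ i ≠ i)
    (habs : ∀ i, ∃ n, φ^[n] i ∈ A) :
    2 * Nat.card (Quotient (EqvGen.setoid (fun i j => φ i = j))) = A.card := by
  classical
  set r : β → β → Prop := fun i j => φ i = j with hr
  have hstep : ∀ (i : β) (n : ℕ), EqvGen r i (φ^[n] i) := by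
    intro i n
    induction n with
    | zero => exact EqvGen.refl i
    | succ n ih =>
      refine EqvGen.trans _ _ _ ih (EqvGen.rel _ _ ?_)
      rw [hr]
      exact (Function.iterate_succ_apply' φ n i).symm
  have halt : ∀ a ∈ A, ∀ k : ℕ, φ^[k] a = a ∨ φ^[k] a = φ a := by
    intro a ha k
    induction k with
    | zero => exact Or.inl rfl
    | succ k ih =>
      rw [Function.iterate_succ_apply']
      rcases ih with h | h
      · rw [h]; exact Or.inr rfl
      · rw [h, hA2 a ha]; exact Or.inl rfl
  have hwd' : ∀ (i : β) (m n : ℕ), m ≤ n → φ^[m] i ∈ A →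
      min (φ^[m] i) (φ (φ^[m] i)) = min (φ^[n] i) (φ (φ^[n] i)) := by
    intro i m n hmn hm
    have h1 : φ^[n] i = φ^[n - m] (φ^[m] i) := by
      rw [← Function.iterate_add_apply]
      congr 1
      omega
    rcases halt _ hm (n - m) with h | h
    · rw [h1, h]
    · rw [h1, h, hA2 _ hm, min_comm]
  have hwd : ∀ (i : β) (m n : ℕ), φ^[m] i ∈ A → φ^[n] i ∈ A →
      min (φ^[m] i) (φ (φ^[m] i)) = min (φ^[n] i) (φ (φ^[n] i)) := by
    intro i m n hm hn
    rcases le_total m n with h | h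
    · exact hwd' i m n h hm
    · exact (hwd' i n m h hn).symm
  set c : β → β := fun i => min (φ^[Nat.find (habs i)] i) (φ (φ^[Nat.find (habs i)] i))
    with hc
  have hc_spec : ∀ (i : β) (n : ℕ), φ^[n] i ∈ A →
      c i = min (φ^[n] i) (φ (φ^[n] i)) := by
    intro i n hn
    rw [hc]
    exact hwd i _ n (Nat.find_spec (habs i)) hn
  have hcA : ∀ i, c i ∈ A ∧ c i < φ (c i) := by
    intro i
    have ha : φ^[Nat.find (habs i)] i ∈ A := Nat.find_spec (habs i)
    set a := φ^[Nat.find (habs i)] i with hadef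
    have hci : c i = min a (φ a) := rfl
    rcases min_cases a (φ a) with ⟨h1, h2⟩ | ⟨h1, h2⟩
    · rw [hci, h1]
      exact ⟨ha, lt_of_le_of_ne h2 (Ne.symm (hA3 a ha))⟩
    · rw [hci, h1]
      refine ⟨hA1 a ha, ?_⟩
      rw [hA2 a ha]
      exact h2
  have hcφ : ∀ i, c (φ i) = c i := by
    intro i
    obtain ⟨n, hn⟩ := habs i
    have hn' : φ^[n] (φ i) ∈ A := by
      rw [← Function.iterate_succ_apply, Function.iterate_succ_apply']
      exact hA1 _ hn
    rw [hc_spec (φ i) n hn', hc_spec i n hn]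
    have h1 : φ^[n] (φ i) = φ (φ^[n] i) := by
      rw [← Function.iterate_succ_apply, Function.iterate_succ_apply']
    rw [h1, hA2 _ hn, min_comm]
  have hresp : ∀ i j, EqvGen r i j → c i = c j := by
    intro i j h
    induction h with
    | rel x y hxy => rw [← hxy, hcφ]
    | refl x => rfl
    | symm x y _ ih => exact ih.symm
    | trans x y z _ _ ih1 ih2 => exact ih1.trans ih2
  have hic : ∀ i, EqvGen r i (c i) := by
    intro i
    have ha : φ^[Nat.find (habs i)] i ∈ A := Nat.find_spec (habs i)
    set a := φ^[Nat.find (habs i)] i with hadef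
    have hci : c i = min a (φ a) := rfl
    rcases min_choice a (φ a) with h | h
    · rw [hci, h]
      exact hstep i _
    · rw [hci, h]
      exact EqvGen.trans _ _ _ (hstep i _) (EqvGen.rel _ _ rfl)
  set F : Quotient (EqvGen.setoid r) → β := Quotient.lift c hresp with hF
  have hFinj : Function.Injective F := by
    intro x y
    induction x using Quotient.ind
    induction y using Quotient.ind
    intro hxy
    rename_i i j
    have hcij : c i = c j := hxy
    apply Quotient.sound
    have h1 : EqvGen r i (c i) := hic i
    have h2 : EqvGen r j (c j) := hic j
    rw [hcij] at h1
    exact EqvGen.trans _ _ _ h1 (EqvGen.symm _ _ h2)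
  have hcard1 : Nat.card (Quotient (EqvGen.setoid r)) = (Finset.univ.image c).card := by
    rw [← Nat.card_range_of_injective hFinj]
    have hrange : Set.range F = ↑(Finset.univ.image c) := by
      ext y
      simp only [Set.mem_range, Finset.coe_image, Set.mem_image, Finset.coe_univ,
        Set.mem_univ, true_and]
      constructor
      · rintro ⟨q, rfl⟩
        induction q using Quotient.ind
        rename_i i
        exact ⟨i, rfl⟩
      · rintro ⟨i, rfl⟩
        exact ⟨Quotient.mk _ i, rfl⟩
    rw [hrange, Nat.card_coe_set_eq, Set.ncard_coe_finset]
  have himage : Finset.univ.image c = A.filter (fun a => a < φ a) := by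
    ext y
    simp only [Finset.mem_image, Finset.mem_univ, true_and, Finset.mem_filter]
    constructor
    · rintro ⟨i, rfl⟩
      exact ⟨(hcA i).1, (hcA i).2⟩
    · rintro ⟨hyA, hylt⟩
      refine ⟨y, ?_⟩
      have h0 : φ^[0] y ∈ A := hyA
      rw [hc_spec y 0 h0]
      simp only [Function.iterate_zero_apply]
      exact min_eq_left hylt.le
  have hbij : (A.filter (fun a => a < φ a)).card = (A.filter (fun a => ¬ a < φ a)).card := by
    apply Finset.card_nbij' (i := φ) (j := φ)
    · intro a hma
      rw [Finset.mem_coe, Finset.mem_filter] at hma ⊢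
      obtain ⟨haA, halt'⟩ := hma
      refine ⟨hA1 a haA, ?_⟩
      rw [hA2 a haA]
      exact not_lt.mpr halt'.le
    · intro b hmb
      rw [Finset.mem_coe, Finset.mem_filter] at hmb ⊢
      obtain ⟨hbA, hble⟩ := hmb
      refine ⟨hA1 b hbA, ?_⟩
      rw [hA2 b hbA]
      exact lt_of_le_of_ne (not_lt.mp hble) (hA3 b hbA)
    · intro a hma
      rw [Finset.mem_coe, Finset.mem_filter] at hma
      exact hA2 a hma.1
    · intro b hmb
      rw [Finset.mem_coe, Finset.mem_filter] at hmb
      exact hA2 b hmb.1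
  have hsplit := Finset.card_filter_add_card_filter_not
    (s := A) (p := fun a => a < φ a)
  rw [hcard1, himage]
  omega

end Pieces2

section Main
open Finset

variable {p K : ℕ}

lemma iter_mem {φ : Fin p → Fin p} {A : Finset (Fin p)} (h : ∀ i ∈ A, φ i ∈ A) :
    ∀ i ∈ A, ∀ k, φ^[k] i ∈ A := by
  intro i hi k
  induction k with
  | zero => exact hi
  | succ k ih => rw [Function.iterate_succ_apply']; exact h _ ih

lemma exists_iter_per (φ : Fin p → Fin p) (hp : 1 ≤ p) (i : Fin p) :
    ∃ n m, 1 ≤ m ∧ φ^[m] (φ^[n] i) = φ^[n] i := by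
  have : Nonempty (Fin p) := ⟨⟨0, hp⟩⟩
  obtain ⟨a, b, hab, heq⟩ := Finite.exists_ne_map_eq_of_infinite (fun n : ℕ => φ^[n] i)
  rcases Nat.lt_or_ge a b with h | h
  · refine ⟨a, b - a, by omega, ?_⟩
    rw [← Function.iterate_add_apply, show b - a + a = b by omega]
    exact heq.symm
  · have h' : b < a := by omega
    refine ⟨b, a - b, by omega, ?_⟩
    rw [← Function.iterate_add_apply, show a - b + b = a by omega]
    exact heq

lemma two_alt {φ : Fin p → Fin p} {i : Fin p} (h : φ (φ i) = i) :
    ∀ k, φ^[k] i = i ∨ φ^[k] i = φ i := by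
  intro k
  induction k with
  | zero => exact Or.inl rfl
  | succ k ih =>
    rw [Function.iterate_succ_apply']
    rcases ih with h1 | h1
    · rw [h1]; exact Or.inr rfl
    · rw [h1, h]; exact Or.inl rfl

/-- The structural set: involution data on `A`, eventual absorption into `A`. -/
noncomputable def GSet (p : ℕ) (A : Finset (Fin p)) : Finset (Fin p → Fin p) :=
  @Finset.filter _
    (fun φ => (∀ i ∈ A, φ i ∈ A ∧ φ (φ i) = i ∧ φ i ≠ i) ∧ ∀ i, ∃ n, φ^[n] i ∈ A)
    (Classical.decPred _) Finset.univ

lemma mem_GSet {A : Finset (Fin p)} {φ : Fin p → Fin p} :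
    φ ∈ GSet p A ↔
      (∀ i ∈ A, φ i ∈ A ∧ φ (φ i) = i ∧ φ i ≠ i) ∧ ∀ i, ∃ n, φ^[n] i ∈ A := by
  simp [GSet, Finset.mem_filter]

/-- The counted set. -/
noncomputable def SCount (p K : ℕ) : Finset (Fin p → Fin p) :=
  @Finset.filter _
    (fun φ => (∀ i, φ i ≠ i) ∧ (∀ i, (∃ m, 1 ≤ m ∧ φ^[m] i = i) → φ (φ i) = i) ∧
      Nat.card (Quotient (EqvGen.setoid (fun i j => φ i = j))) = K)
    (Classical.decPred _) Finset.univ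

lemma mem_SCount {φ : Fin p → Fin p} :
    φ ∈ SCount p K ↔ (∀ i, φ i ≠ i) ∧ (∀ i, (∃ m, 1 ≤ m ∧ φ^[m] i = i) → φ (φ i) = i) ∧
      Nat.card (Quotient (EqvGen.setoid (fun i j => φ i = j))) = K := by
  simp [SCount, Finset.mem_filter]

lemma GSet_dirA (hp : 1 ≤ p) {A : Finset (Fin p)} {φ : Fin p → Fin p}
    (hS : φ ∈ SCount p K) (hper : Finset.univ.filter (fun i => φ (φ i) = i) = A) :
    φ ∈ GSet p A ∧ A.card = 2 * K := by
  rw [mem_SCount] at hS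
  obtain ⟨h1, h2, h3⟩ := hS
  have hmemA : ∀ i, i ∈ A ↔ φ (φ i) = i := by
    intro i
    rw [← hper, Finset.mem_filter]
    simp
  have hA2 : ∀ i ∈ A, φ (φ i) = i := fun i hi => (hmemA i).mp hi
  have hA1 : ∀ i ∈ A, φ i ∈ A := by
    intro i hi
    rw [hmemA] at hi ⊢
    exact congrArg φ hi
  have habs : ∀ i, ∃ n, φ^[n] i ∈ A := by
    intro i
    obtain ⟨n, m, hm1, hfix⟩ := exists_iter_per φ hp i
    refine ⟨n, ?_⟩
    rw [hmemA]
    exact h2 _ ⟨m, hm1, hfix⟩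
  refine ⟨mem_GSet.mpr ⟨fun i hi => ⟨hA1 i hi, hA2 i hi, h1 i⟩, habs⟩, ?_⟩
  have := classes_card φ A hA1 hA2 (fun i _ => h1 i) habs
  rw [h3] at this
  omega

lemma GSet_dirB (hK1 : 1 ≤ K) {A : Finset (Fin p)} {φ : Fin p → Fin p}
    (hcA : A.card = 2 * K) (hG : φ ∈ GSet p A) :
    φ ∈ SCount p K ∧ Finset.univ.filter (fun i => φ (φ i) = i) = A := by
  rw [mem_GSet] at hG
  obtain ⟨hGm, habs⟩ := hG
  have hA1 : ∀ i ∈ A, φ i ∈ A := fun i hi => (hGm i hi).1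
  have hA2 : ∀ i ∈ A, φ (φ i) = i := fun i hi => (hGm i hi).2.1
  have h1 : ∀ i, φ i ≠ i := by
    intro i hfix
    by_cases hi : i ∈ A
    · exact (hGm i hi).2.2 hfix
    · obtain ⟨n, hn⟩ := habs i
      rw [Function.iterate_fixed hfix n] at hn
      exact hi hn
  have h2 : ∀ i, (∃ m, 1 ≤ m ∧ φ^[m] i = i) → φ (φ i) = i := by
    rintro i ⟨m, hm1, hmfix⟩
    obtain ⟨n, hn⟩ := habs i
    have hfix : φ^[m * n] i = i := by
      rw [Function.iterate_mul]
      exact Function.iterate_fixed hmfix n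
    have hmn : n ≤ m * n := Nat.le_mul_of_pos_left n (by omega)
    have hiA : i ∈ A := by
      have heq : φ^[m * n] i = φ^[m * n - n] (φ^[n] i) := by
        rw [← Function.iterate_add_apply, show m * n - n + n = m * n by omega]
      rw [← hfix, heq]
      exact iter_mem hA1 _ hn _
    exact hA2 i hiA
  have h3 : Nat.card (Quotient (EqvGen.setoid (fun i j => φ i = j))) = K := by
    have := classes_card φ A hA1 hA2 (fun i hi => (hGm i hi).2.2) habs
    omega
  refine ⟨mem_SCount.mpr ⟨h1, h2, h3⟩, ?_⟩
  ext i
  simp only [Finset.mem_filter, Finset.mem_univ, true_and]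
  constructor
  · intro hper
    obtain ⟨n, hn⟩ := habs i
    rcases two_alt hper n with h | h
    · rwa [h] at hn
    · rw [h] at hn
      have := hA2 _ hn
      have h4 : φ (φ i) ∈ A := hA1 _ hn
      rwa [hper] at h4
  · exact hA2 i

lemma GSet_card (A : Finset (Fin p)) :
    (GSet p A).card = (Invo A).card * (Esc Aᶜ (Finset.univ : Finset (Fin p))).card := by
  rw [← Finset.card_product]
  apply Finset.card_nbij'
    (i := fun φ => (fun x => if x ∈ A then φ x else x, fun x => if x ∈ A then x else φ x))
    (j := fun g => fun x => if x ∈ A then g.1 x else g.2 x)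
  · intro φ hφ
    rw [Finset.mem_coe, mem_GSet] at hφ
    obtain ⟨hGm, habs⟩ := hφ
    rw [Finset.mem_coe, Finset.mem_product]
    constructor
    · rw [mem_Invo]
      refine ⟨fun x hx => if_neg hx, fun x hx => ?_⟩
      dsimp only
      simp only [if_pos hx, if_pos (hGm x hx).1]
      exact ⟨(hGm x hx).1, (hGm x hx).2.1, (hGm x hx).2.2⟩
    · rw [mem_Esc]
      refine ⟨fun x hx => ?_, fun x _ => Finset.mem_univ _, fun x => ?_⟩
      · rw [Finset.mem_compl, not_not] at hx
        exact if_pos hx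
      · -- escape from Aᶜ
        obtain ⟨n, hn⟩ := habs x
        have h' : ∃ n, ¬ (φ^[n] x ∉ A) := ⟨n, not_not_intro hn⟩
        obtain ⟨n₀, hn₀, hmin⟩ := first_exit (fun y => y ∉ A) h'
        rw [not_not] at hn₀
        refine ⟨n₀, ?_⟩
        have hag : φ^[n₀] x = (fun x => if x ∈ A then x else φ x)^[n₀] x :=
          iter_agree (fun y hy => (if_neg hy).symm) hmin
        rw [← hag, Finset.mem_compl, not_not]
        exact hn₀
  · intro g hg
    rw [Finset.mem_coe, Finset.mem_product] at hg
    obtain ⟨hg1, hg2⟩ := hg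
    rw [mem_Invo] at hg1
    rw [mem_Esc] at hg2
    obtain ⟨hg1supp, hg1map⟩ := hg1
    obtain ⟨hg2supp, -, hg2esc⟩ := hg2
    rw [Finset.mem_coe, mem_GSet]
    constructor
    · intro i hi
      simp only [if_pos hi, if_pos (hg1map i hi).1]
      exact ⟨(hg1map i hi).1, (hg1map i hi).2.1, (hg1map i hi).2.2⟩
    · intro x
      obtain ⟨n₀, hn₀, hmin⟩ := first_exit (fun y => y ∈ Aᶜ) (hg2esc x)
      rw [Finset.mem_compl, not_not] at hn₀
      refine ⟨n₀, ?_⟩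
      have hag : g.2^[n₀] x = (fun x => if x ∈ A then g.1 x else g.2 x)^[n₀] x := by
        apply iter_agree _ hmin
        intro y hy
        rw [Finset.mem_compl] at hy
        exact (if_neg hy).symm
      rw [← hag]
      exact hn₀
  · intro φ hφ
    rw [Finset.mem_coe, mem_GSet] at hφ
    funext x
    dsimp only
    by_cases hx : x ∈ A
    · simp only [if_pos hx]
    · simp only [if_neg hx]
  · intro g hg
    rw [Finset.mem_coe, Finset.mem_product] at hg
    obtain ⟨hg1, hg2⟩ := hg
    rw [mem_Invo] at hg1
    rw [mem_Esc] at hg2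
    apply Prod.ext
    · funext x
      dsimp only
      by_cases hx : x ∈ A
      · simp only [if_pos hx]
      · simp only [if_neg hx]
        exact (hg1.1 x hx).symm
    · funext x
      dsimp only
      by_cases hx : x ∈ A
      · simp only [if_pos hx]
        have : x ∉ Aᶜ := by rw [Finset.mem_compl, not_not]; exact hx
        exact (hg2.1 x this).symm
      · simp only [if_neg hx]

lemma esc_compl_card (hK2 : 2 * K ≤ p) (A : Finset (Fin p)) (hA : A.card = 2 * K) :
    (Esc Aᶜ (Finset.univ : Finset (Fin p))).card
      = (if 2 * K = p then 1 else 2 * K * p ^ (p - 2 * K - 1)) := by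
  have hAc : Aᶜ.card = p - 2 * K := by
    rw [Finset.card_compl, hA, Fintype.card_fin]
  by_cases he : 2 * K = p
  · rw [if_pos he]
    have hone : Aᶜ = ∅ := Finset.card_eq_zero.mp (by omega)
    rw [hone, Esc_empty, Finset.card_singleton]
  · rw [if_neg he, esc_card_eq (p - 2 * K) Aᶜ Finset.univ (Finset.subset_univ _) hAc (by omega),
      Finset.card_univ, Fintype.card_fin]
    congr 1
    omega

lemma SCount_card (hp : 2 ≤ p) (hK1 : 1 ≤ K) (hK2 : 2 * K ≤ p) :
    (SCount p K).card = p.choose (2 * K) *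
      (Jfun K * (if 2 * K = p then 1 else 2 * K * p ^ (p - 2 * K - 1))) := by
  classical
  have hp1 : 1 ≤ p := by omega
  have hfib : (SCount p K).card = ∑ A ∈ (Finset.univ : Finset (Fin p)).powerset,
      ((SCount p K).filter
        (fun φ => Finset.univ.filter (fun i => φ (φ i) = i) = A)).card := by
    apply Finset.card_eq_sum_card_fiberwise
    intro φ _
    exact Finset.mem_powerset.mpr (Finset.subset_univ _)
  have hfibval : ∀ A ∈ (Finset.univ : Finset (Fin p)).powerset,
      ((SCount p K).filter
        (fun φ => Finset.univ.filter (fun i => φ (φ i) = i) = A)).card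
      = if A.card = 2 * K then (GSet p A).card else 0 := by
    intro A _
    by_cases hcA : A.card = 2 * K
    · rw [if_pos hcA]
      congr 1
      ext φ
      rw [Finset.mem_filter]
      constructor
      · rintro ⟨hS, hper⟩
        exact (GSet_dirA hp1 hS hper).1
      · intro hG
        exact ⟨(GSet_dirB hK1 hcA hG).1, (GSet_dirB hK1 hcA hG).2⟩
    · rw [if_neg hcA]
      rw [Finset.card_eq_zero, Finset.eq_empty_iff_forall_notMem]
      intro φ hφ
      rw [Finset.mem_filter] at hφ
      exact hcA (GSet_dirA hp1 hφ.1 hφ.2).2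
  rw [hfib, Finset.sum_congr rfl hfibval, Finset.sum_ite, Finset.sum_const_zero, add_zero]
  rw [← Finset.powersetCard_eq_filter]
  have hval : ∀ A ∈ Finset.powersetCard (2 * K) (Finset.univ : Finset (Fin p)),
      (GSet p A).card = Jfun K * (if 2 * K = p then 1 else 2 * K * p ^ (p - 2 * K - 1)) := by
    intro A hA
    rw [Finset.mem_powersetCard] at hA
    rw [GSet_card, invo_card K A hA.2, esc_compl_card hK2 A hA.2]
  rw [Finset.sum_congr rfl hval, Finset.sum_const, Finset.card_powersetCard,
    Finset.card_univ, Fintype.card_fin, smul_eq_mul]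

end Main

lemma nat_card_subtype_eq (p K : ℕ) :
    Nat.card {φ : (Fin p → Fin p) //
        (∀ i, φ i ≠ i) ∧
        (∀ i, (∃ m, 1 ≤ m ∧ φ^[m] i = i) → φ (φ i) = i) ∧
        Nat.card (Quotient (EqvGen.setoid (fun i j => φ i = j))) = K}
      = (SCount p K).card := by
  classical
  have e : {φ : (Fin p → Fin p) //
        (∀ i, φ i ≠ i) ∧
        (∀ i, (∃ m, 1 ≤ m ∧ φ^[m] i = i) → φ (φ i) = i) ∧
        Nat.card (Quotient (EqvGen.setoid (fun i j => φ i = j))) = K}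
      ≃ {φ // φ ∈ SCount p K} :=
    Equiv.subtypeEquivRight (fun φ => mem_SCount.symm)
  rw [Nat.card_congr e]
  simp [Nat.card_eq_fintype_card, Fintype.card_coe]

/-- The number of nearest-neighbor-type functional digraphs on `{1, …, p}` with `K`
connected components (equation (3.9)). -/
theorem statement14 (p K : ℕ) (hp : 2 ≤ p) (hK1 : 1 ≤ K) (hK2 : 2 * K ≤ p) :
    (Nat.card {φ : (Fin p → Fin p) //
        (∀ i, φ i ≠ i) ∧
        (∀ i, (∃ m, 1 ≤ m ∧ φ^[m] i = i) → φ (φ i) = i) ∧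
        Nat.card (Quotient (EqvGen.setoid (fun i j => φ i = j))) = K} : ℝ) =
      2 * (Nat.factorial (p - 1) : ℝ) * (p : ℝ) ^ (p - 2 * K) /
        (2 ^ K * (Nat.factorial (K - 1) : ℝ) * (Nat.factorial (p - 2 * K) : ℝ)) := by
  classical
  rw [nat_card_subtype_eq p K, SCount_card hp hK1 hK2]
  have hKfac : ((K - 1).factorial : ℝ) ≠ 0 := Nat.cast_ne_zero.mpr (Nat.factorial_ne_zero _)
  have hpKfac : ((p - 2 * K).factorial : ℝ) ≠ 0 := Nat.cast_ne_zero.mpr (Nat.factorial_ne_zero _)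
  have h2K : ((2 : ℝ) ^ K) ≠ 0 := pow_ne_zero _ two_ne_zero
  have hden : (2 : ℝ) ^ K * ((K - 1).factorial : ℝ) * ((p - 2 * K).factorial : ℝ) ≠ 0 :=
    mul_ne_zero (mul_ne_zero h2K hKfac) hpKfac
  rw [eq_div_iff hden]
  have h2 := Jfun_mul K
  have h3 : K * (K - 1).factorial = K.factorial := Nat.mul_factorial_pred (by omega)
  have h4 : p * (p - 1).factorial = p.factorial := Nat.mul_factorial_pred (by omega)
  by_cases he : 2 * K = p
  · rw [if_pos he]
    have hpk0 : p - 2 * K = 0 := by omega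
    rw [hpk0]
    have hnat : p.choose (2 * K) * (Jfun K * 1) * (2 ^ K * (K - 1).factorial * Nat.factorial 0) * K
        = 2 * (p - 1).factorial * p ^ 0 * K := by
      have hch : p.choose (2 * K) = 1 := by rw [← he]; exact Nat.choose_self _
      calc p.choose (2 * K) * (Jfun K * 1) * (2 ^ K * (K - 1).factorial * Nat.factorial 0) * K
          = p.choose (2 * K) * (Jfun K * (2 ^ K * (K * (K - 1).factorial))) := by
            rw [Nat.factorial_zero]; ring
        _ = 1 * (Jfun K * (2 ^ K * K.factorial)) := by rw [h3, hch]
        _ = (2 * K).factorial := by rw [one_mul, h2]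
        _ = p.factorial := by rw [he]
        _ = p * (p - 1).factorial := h4.symm
        _ = 2 * (p - 1).factorial * p ^ 0 * K := by rw [← he]; ring
    have hnat' : p.choose (2 * K) * (Jfun K * 1) * (2 ^ K * (K - 1).factorial * Nat.factorial 0)
        = 2 * (p - 1).factorial * p ^ 0 :=
      Nat.eq_of_mul_eq_mul_right (by omega) hnat
    exact_mod_cast hnat'
  · rw [if_neg he]
    have hlt : 2 * K < p := by omega
    have h5 : p ^ (p - 2 * K) = p ^ (p - 2 * K - 1) * p := by
      rw [← pow_succ]
      congr 1
      omega
    have h1 : p.choose (2 * K) * (2 * K).factorial * (p - 2 * K).factorial = p.factorial :=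
      Nat.choose_mul_factorial_mul_factorial hK2
    have hnat : p.choose (2 * K) * (Jfun K * (2 * K * p ^ (p - 2 * K - 1))) *
          (2 ^ K * (K - 1).factorial * (p - 2 * K).factorial) * (K * (2 * K).factorial)
        = 2 * (p - 1).factorial * p ^ (p - 2 * K) * (K * (2 * K).factorial) := by
      calc p.choose (2 * K) * (Jfun K * (2 * K * p ^ (p - 2 * K - 1))) *
            (2 ^ K * (K - 1).factorial * (p - 2 * K).factorial) * (K * (2 * K).factorial)
          = (p.choose (2 * K) * (2 * K).factorial * (p - 2 * K).factorial) *
              (Jfun K * (2 ^ K * (K * (K - 1).factorial))) * (2 * K * p ^ (p - 2 * K - 1)) := by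
            ring
        _ = p.factorial * (Jfun K * (2 ^ K * K.factorial)) * (2 * K * p ^ (p - 2 * K - 1)) := by
            rw [h1, h3]
        _ = p.factorial * (2 * K).factorial * (2 * K * p ^ (p - 2 * K - 1)) := by rw [h2]
        _ = (p * (p - 1).factorial) * (2 * K).factorial * (2 * K * p ^ (p - 2 * K - 1)) := by
            rw [h4]
        _ = 2 * (p - 1).factorial * (p ^ (p - 2 * K - 1) * p) * (K * (2 * K).factorial) := by
            ring
        _ = 2 * (p - 1).factorial * p ^ (p - 2 * K) * (K * (2 * K).factorial) := by rw [← h5]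
    have hpos : 0 < K * (2 * K).factorial :=
      Nat.mul_pos (by omega) (Nat.factorial_pos _)
    have hnat' : p.choose (2 * K) * (Jfun K * (2 * K * p ^ (p - 2 * K - 1))) *
          (2 ^ K * (K - 1).factorial * (p - 2 * K).factorial)
        = 2 * (p - 1).factorial * p ^ (p - 2 * K) :=
      Nat.eq_of_mul_eq_mul_right hpos hnat
    exact_mod_cast hnat'
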